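/- Let D = (V, A) be a digraph, let s be a nonnegative integer, let Π be a sequence property, and let C ⊆ V be a 2s(Δ_D + 1)-block set for D. If there exists a loopless arc set A' ⊆ (V × V) \ A with |A'| ≤ s such that σ(D + A') fulfills Π, then there exists a loopless arc set A* ⊆ (C × C) \ A with |A*| ≤ s such that σ(D + A*) fulfills Π. -/
import Mathlib


/-- Indegree of vertex `v` in the digraph with arc set `A`. -/
def inDeg {V : Type*} [DecidableEq V] (A : Finset (V × V)) (v : V) : ℕ :=
  (A.filter fun a => a.2 = v).card

/-- Outdegree of vertex `v` in the digraph with arc set `A`. -/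
def outDeg {V : Type*} [DecidableEq V] (A : Finset (V × V)) (v : V) : ℕ :=
  (A.filter fun a => a.1 = v).card

/-- Degree pair (indegree, outdegree) of vertex `v`. -/
def deg {V : Type*} [DecidableEq V] (A : Finset (V × V)) (v : V) : ℕ × ℕ :=
  (inDeg A v, outDeg A v)

/-- Degree sequence of the digraph with arc set `A`. -/
def degSeq {V : Type*} [Fintype V] [DecidableEq V] (A : Finset (V × V)) :
    Multiset (ℕ × ℕ) :=
  Finset.univ.val.map (deg A)

/-- Maximum in- or outdegree in the digraph with arc set `A`. -/
def maxDeg {V : Type*} [Fintype V] [DecidableEq V] (A : Finset (V × V)) : ℕ :=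
  Finset.univ.sup fun v => max (inDeg A v) (outDeg A v)

/-- The block `B_D(d)`: all vertices with degree pair `d`. -/
def block {V : Type*} [Fintype V] [DecidableEq V]
    (A : Finset (V × V)) (d : ℕ × ℕ) : Finset V :=
  Finset.univ.filter fun v => deg A v = d

/-- `C` is an `α`-block set for `D`: for each degree `d` occurring in `σ(D)`,
`C` contains exactly `min |B_D(d)| α` vertices with degree `d`. -/
def IsBlockSet {V : Type*} [Fintype V] [DecidableEq V]
    (A : Finset (V × V)) (α : ℕ) (C : Finset V) : Prop :=
  ∀ d : ℕ × ℕ, (∃ v : V, deg A v = d) →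
    (block A d ∩ C).card = min (block A d).card α

open Finset

lemma inDeg_union {V : Type*} [DecidableEq V] (A B : Finset (V × V))
    (h : Disjoint A B) (v : V) : inDeg (A ∪ B) v = inDeg A v + inDeg B v := by
  unfold inDeg
  rw [filter_union, card_union_of_disjoint (h.mono (filter_subset _ _) (filter_subset _ _))]

lemma outDeg_union {V : Type*} [DecidableEq V] (A B : Finset (V × V))
    (h : Disjoint A B) (v : V) : outDeg (A ∪ B) v = outDeg A v + outDeg B v := by
  unfold outDeg
  rw [filter_union, card_union_of_disjoint (h.mono (filter_subset _ _) (filter_subset _ _))]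

lemma inDeg_le_maxDeg {V : Type*} [Fintype V] [DecidableEq V] (A : Finset (V × V)) (v : V) :
    inDeg A v ≤ maxDeg A :=
  le_trans (le_max_left _ _)
    (Finset.le_sup (f := fun w => max (inDeg A w) (outDeg A w)) (mem_univ v))

lemma outDeg_le_maxDeg {V : Type*} [Fintype V] [DecidableEq V] (A : Finset (V × V)) (v : V) :
    outDeg A v ≤ maxDeg A :=
  le_trans (le_max_right _ _)
    (Finset.le_sup (f := fun w => max (inDeg A w) (outDeg A w)) (mem_univ v))

lemma key {V : Type*} [Fintype V] [DecidableEq V]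
    (A : Finset (V × V))
    (s : ℕ) (C : Finset V)
    (hC : IsBlockSet A (2 * s * (maxDeg A + 1)) C) :
    ∀ n (A' : Finset (V × V)),
      (((A'.image Prod.fst ∪ A'.image Prod.snd)) \ C).card ≤ n →
      (∀ a ∈ A', a ∉ A) → (∀ v : V, (v, v) ∉ A') → A'.card ≤ s →
      ∃ A'' : Finset (V × V), A'' ⊆ C ×ˢ C ∧
        (∀ a ∈ A'', a ∉ A) ∧ (∀ v : V, (v, v) ∉ A'') ∧ A''.card ≤ s ∧
        degSeq (A ∪ A'') = degSeq (A ∪ A') := by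
  intro n
  induction n with
  | zero =>
    intro A' hn hd hl hs
    refine ⟨A', ?_, hd, hl, hs, rfl⟩
    intro a ha
    have h1 : a.1 ∈ A'.image Prod.fst ∪ A'.image Prod.snd :=
      mem_union_left _ (mem_image_of_mem _ ha)
    have h2 : a.2 ∈ A'.image Prod.fst ∪ A'.image Prod.snd :=
      mem_union_right _ (mem_image_of_mem _ ha)
    have hempty : (A'.image Prod.fst ∪ A'.image Prod.snd) \ C = ∅ :=
      card_eq_zero.mp (Nat.le_zero.mp hn)
    have hsub : (A'.image Prod.fst ∪ A'.image Prod.snd) ⊆ C := by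
      intro x hx
      by_contra hxC
      exact (notMem_empty x) (hempty ▸ mem_sdiff.mpr ⟨hx, hxC⟩)
    have := mem_product.mpr ⟨hsub h1, hsub h2⟩
    simpa using this
  | succ n ih =>
    intro A' hn hd hl hs
    set touched := A'.image Prod.fst ∪ A'.image Prod.snd with htouched
    by_cases hle : (touched \ C).card ≤ n
    · exact ih A' hle hd hl hs
    -- pick v ∈ touched \ C
    have hne : (touched \ C).Nonempty := by
      rw [← card_pos]; omega
    obtain ⟨v, hv⟩ := hne
    obtain ⟨hvt, hvC⟩ := mem_sdiff.mp hv
    have hloopless : ∀ a ∈ A', a.1 ≠ a.2 := by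
      intro a ha h
      obtain ⟨x, y⟩ := a
      dsimp at h
      subst h
      exact hl x ha
    -- s ≥ 1
    have hs1 : 1 ≤ s := by
      have : A'.Nonempty := by
        rcases mem_union.mp hvt with h | h <;>
          · obtain ⟨a, ha, _⟩ := mem_image.mp h; exact ⟨a, ha⟩
      have := card_pos.mpr this
      omega
    set Δ := maxDeg A with hΔ
    set d := deg A v with hdv
    have hblock := hC d ⟨v, rfl⟩
    have hvb : v ∈ block A d := mem_filter.mpr ⟨mem_univ v, hdv.symm⟩
    -- the block must be big
    have hbig : (block A d ∩ C).card = 2 * s * (Δ + 1) := by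
      rcases le_or_gt (block A d).card (2 * s * (Δ + 1)) with h | h
      · exfalso
        rw [min_eq_left h] at hblock
        have : block A d ∩ C = block A d :=
          eq_of_subset_of_card_le (inter_subset_left) (le_of_eq hblock.symm)
        have hv2 : v ∈ block A d ∩ C := by rw [this]; exact hvb
        exact hvC (mem_inter.mp hv2).2
      · rw [min_eq_right (le_of_lt h)] at hblock; exact hblock
    -- forbidden sets
    set Bset := univ.filter (fun u : V => ∃ a ∈ A',
      (a.1 = v ∧ (u, a.2) ∈ A) ∨ (a.2 = v ∧ (a.1, u) ∈ A)) with hBset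
    have hBcard : Bset.card ≤ s * Δ := by
      have hsub : Bset ⊆ A'.biUnion (fun a => univ.filter (fun u : V =>
          (a.1 = v ∧ (u, a.2) ∈ A) ∨ (a.2 = v ∧ (a.1, u) ∈ A))) := by
        intro u hu
        obtain ⟨a, ha, hcase⟩ := (mem_filter.mp hu).2
        exact mem_biUnion.mpr ⟨a, ha, mem_filter.mpr ⟨mem_univ u, hcase⟩⟩
      calc Bset.card ≤ _ := card_le_card hsub
        _ ≤ ∑ a ∈ A', (univ.filter (fun u : V =>
            (a.1 = v ∧ (u, a.2) ∈ A) ∨ (a.2 = v ∧ (a.1, u) ∈ A))).card :=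
          card_biUnion_le
        _ ≤ ∑ _a ∈ A', Δ := by
          apply Finset.sum_le_sum
          intro a ha
          rcases ne_or_eq a.1 v with h1 | h1
          · rcases ne_or_eq a.2 v with h2 | h2
            · simp [h1, h2]
            · -- a.2 = v : filter is {u | (a.1, u) ∈ A}, card ≤ outDeg A a.1 ≤ Δ
              have : (univ.filter (fun u : V =>
                  (a.1 = v ∧ (u, a.2) ∈ A) ∨ (a.2 = v ∧ (a.1, u) ∈ A))).card
                  ≤ outDeg A a.1 := by
                apply Finset.card_le_card_of_injOn (fun u => (a.1, u))
                · intro u hu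
                  obtain ⟨-, hcase⟩ := mem_filter.mp hu
                  rcases hcase with ⟨hc, -⟩ | ⟨-, hc⟩
                  · exact absurd hc h1
                  · exact mem_filter.mpr ⟨hc, rfl⟩
                · intro x _ y _ h
                  exact (Prod.ext_iff.mp h).2
              exact this.trans (outDeg_le_maxDeg A a.1)
          · -- a.1 = v, so a.2 ≠ v
            have h2 : a.2 ≠ v := fun h => hloopless a ha (by rw [h1, h])
            have : (univ.filter (fun u : V =>
                (a.1 = v ∧ (u, a.2) ∈ A) ∨ (a.2 = v ∧ (a.1, u) ∈ A))).card
                ≤ inDeg A a.2 := by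
              apply Finset.card_le_card_of_injOn (fun u => (u, a.2))
              · intro u hu
                obtain ⟨-, hcase⟩ := mem_filter.mp hu
                rcases hcase with ⟨-, hc⟩ | ⟨hc, -⟩
                · exact mem_filter.mpr ⟨hc, rfl⟩
                · exact absurd hc h2
              · intro x _ y _ h
                exact (Prod.ext_iff.mp h).1
            exact this.trans (inDeg_le_maxDeg A a.2)
        _ = A'.card * Δ := by rw [Finset.sum_const, smul_eq_mul]
        _ ≤ s * Δ := Nat.mul_le_mul_right Δ hs
    have htc : touched.card ≤ 2 * s := by
      calc touched.card ≤ (A'.image Prod.fst).card + (A'.image Prod.snd).card :=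
            card_union_le _ _
        _ ≤ A'.card + A'.card := Nat.add_le_add card_image_le card_image_le
        _ ≤ 2 * s := by omega
    have hec : (touched.erase v).card ≤ 2 * s - 1 := by
      rw [card_erase_of_mem hvt]; omega
    -- good set nonempty
    set G := (block A d ∩ C) \ (touched.erase v ∪ Bset) with hG
    have hGne : G.Nonempty := by
      rw [← card_pos]
      have h1 : (block A d ∩ C).card ≤ G.card + (touched.erase v ∪ Bset).card :=
        card_le_card_sdiff_add_card
      have h2 : (touched.erase v ∪ Bset).card ≤ (2 * s - 1) + s * Δ :=
        le_trans (card_union_le _ _) (Nat.add_le_add hec hBcard)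
      have h3 : 2 * s * (Δ + 1) = 2 * (s * Δ) + 2 * s := by ring
      omega
    obtain ⟨u, hu⟩ := hGne
    obtain ⟨hub, hunot⟩ := mem_sdiff.mp hu
    obtain ⟨hublock, huC⟩ := mem_inter.mp hub
    have hud : deg A u = d := (mem_filter.mp hublock).2
    have huv : u ≠ v := fun h => hvC (h ▸ huC)
    have hut : u ∉ touched := by
      intro h
      exact hunot (mem_union_left _ (mem_erase.mpr ⟨huv, h⟩))
    have huB : u ∉ Bset := fun h => hunot (mem_union_right _ h)
    -- the swap
    set τ := Equiv.swap v u with hτ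
    have hτv : τ v = u := Equiv.swap_apply_left v u
    have hτu : τ u = v := Equiv.swap_apply_right v u
    have hτfix : ∀ x, x ≠ v → x ≠ u → τ x = x := fun x h1 h2 =>
      Equiv.swap_apply_of_ne_of_ne h1 h2
    set f : V × V → V × V := fun a => (τ a.1, τ a.2) with hf
    have hfinj : Function.Injective f := by
      intro a b h
      obtain ⟨h1, h2⟩ := Prod.ext_iff.mp h
      exact Prod.ext_iff.mpr ⟨τ.injective h1, τ.injective h2⟩
    set A₂ := A'.image f with hA₂
    -- endpoints of A' are in touched, hence ≠ u
    have hendu : ∀ a ∈ A', a.1 ≠ u ∧ a.2 ≠ u := by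
      intro a ha
      constructor <;> intro h <;> apply hut
      · exact mem_union_left _ (mem_image.mpr ⟨a, ha, h⟩)
      · exact mem_union_right _ (mem_image.mpr ⟨a, ha, h⟩)
    -- c1 : A₂ disjoint from A
    have hc1 : ∀ a ∈ A₂, a ∉ A := by
      intro a ha haA
      obtain ⟨b, hb, rfl⟩ := mem_image.mp ha
      obtain ⟨hb1u, hb2u⟩ := hendu b hb
      rcases ne_or_eq b.1 v with h1 | h1
      · rcases ne_or_eq b.2 v with h2 | h2
        · rw [hf] at haA
          simp only [hτfix b.1 h1 hb1u, hτfix b.2 h2 hb2u] at haA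
          exact hd b hb (by simpa using haA)
        · -- b.2 = v : f b = (b.1, u) ∈ A → u ∈ Bset
          apply huB
          rw [hBset]
          refine mem_filter.mpr ⟨mem_univ u, b, hb, Or.inr ⟨h2, ?_⟩⟩
          simp only [hf] at haA
          rw [hτfix b.1 h1 hb1u, h2, hτv] at haA
          exact haA
      · -- b.1 = v, b.2 ≠ v
        have h2 : b.2 ≠ v := fun h => hloopless b hb (by rw [h1, h])
        apply huB
        rw [hBset]
        refine mem_filter.mpr ⟨mem_univ u, b, hb, Or.inl ⟨h1, ?_⟩⟩
        simp only [hf] at haA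
        rw [h1, hτv, hτfix b.2 h2 hb2u] at haA
        exact haA
    -- c2 : loopless
    have hc2 : ∀ w : V, (w, w) ∉ A₂ := by
      intro w hw
      obtain ⟨b, hb, hfb⟩ := mem_image.mp hw
      obtain ⟨h1, h2⟩ := Prod.ext_iff.mp hfb
      exact hloopless b hb (τ.injective (h1.trans h2.symm))
    -- c3 : card
    have hc3 : A₂.card ≤ s := by
      rw [hA₂, card_image_of_injective _ hfinj]; exact hs
    -- disjointness for unions
    have hdisj' : Disjoint A A' := by
      rw [disjoint_right]; exact fun a ha => hd a ha
    have hdisj₂ : Disjoint A A₂ := by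
      rw [disjoint_right]; exact fun a ha => hc1 a ha
    -- degree preservation
    have hdegA : ∀ x : V, deg A (τ x) = deg A x := by
      intro x
      rcases eq_or_ne x v with rfl | h1
      · rw [hτv, hud, hdv]
      · rcases eq_or_ne x u with rfl | h2
        · rw [hτu, ← hdv, hud]
        · rw [hτfix x h1 h2]
    have hdeg₂ : ∀ x : V, deg A₂ (τ x) = deg A' x := by
      intro x
      have hin : inDeg A₂ (τ x) = inDeg A' x := by
        unfold inDeg
        rw [hA₂, filter_image, card_image_of_injective _ hfinj]
        congr 1
        apply filter_congr
        intro a _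
        simp only [hf]
        exact ⟨fun h => τ.injective h, fun h => by rw [h]⟩
      have hout : outDeg A₂ (τ x) = outDeg A' x := by
        unfold outDeg
        rw [hA₂, filter_image, card_image_of_injective _ hfinj]
        congr 1
        apply filter_congr
        intro a _
        simp only [hf]
        exact ⟨fun h => τ.injective h, fun h => by rw [h]⟩
      unfold deg
      rw [hin, hout]
    have hdegfull : ∀ x : V, deg (A ∪ A₂) (τ x) = deg (A ∪ A') x := by
      intro x
      unfold deg
      rw [inDeg_union A A₂ hdisj₂, outDeg_union A A₂ hdisj₂,
        inDeg_union A A' hdisj', outDeg_union A A' hdisj']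
      have h1 := hdegA x
      have h2 := hdeg₂ x
      unfold deg at h1 h2
      obtain ⟨h1a, h1b⟩ := Prod.ext_iff.mp h1
      obtain ⟨h2a, h2b⟩ := Prod.ext_iff.mp h2
      simp only at h1a h1b h2a h2b
      rw [h1a, h1b, h2a, h2b]
    -- c4 : degSeq equality
    have hc4 : degSeq (A ∪ A₂) = degSeq (A ∪ A') := by
      unfold degSeq
      have huniv : Finset.univ.val.map ⇑τ = Finset.univ.val :=
        congrArg Finset.val (Finset.map_univ_equiv τ)
      conv_lhs => rw [← huniv, Multiset.map_map]
      apply Multiset.map_congr rfl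
      intro x _
      exact hdegfull x
    -- c5 : touched decreases
    have hc5 : ((A₂.image Prod.fst ∪ A₂.image Prod.snd) \ C).card ≤ n := by
      have hsub : (A₂.image Prod.fst ∪ A₂.image Prod.snd) \ C ⊆ (touched \ C).erase v := by
        intro x hx
        obtain ⟨hx1, hxC⟩ := mem_sdiff.mp hx
        have hxy : ∃ y, y ∈ touched ∧ y ≠ u ∧ x = τ y := by
          rcases mem_union.mp hx1 with h | h
          · obtain ⟨c, hc, hcx⟩ := mem_image.mp h
            obtain ⟨b, hb, rfl⟩ := mem_image.mp hc
            exact ⟨b.1, mem_union_left _ (mem_image.mpr ⟨b, hb, rfl⟩),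
              (hendu b hb).1, hcx.symm⟩
          · obtain ⟨c, hc, hcx⟩ := mem_image.mp h
            obtain ⟨b, hb, rfl⟩ := mem_image.mp hc
            exact ⟨b.2, mem_union_right _ (mem_image.mpr ⟨b, hb, rfl⟩),
              (hendu b hb).2, hcx.symm⟩
        obtain ⟨y, hyt, hyu, rfl⟩ := hxy
        have hyv : y ≠ v := by
          rintro rfl
          rw [hτv] at hxC
          exact hxC huC
        rw [hτfix y hyv hyu]
        rw [hτfix y hyv hyu] at hxC
        exact mem_erase.mpr ⟨hyv, mem_sdiff.mpr ⟨hyt, hxC⟩⟩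
      calc _ ≤ ((touched \ C).erase v).card := card_le_card hsub
        _ = (touched \ C).card - 1 := card_erase_of_mem hv
        _ ≤ n := by omega
    obtain ⟨A'', hA''1, hA''2, hA''3, hA''4, hA''5⟩ := ih A₂ hc5 hc1 hc2 hc3
    exact ⟨A'', hA''1, hA''2, hA''3, hA''4, hA''5.trans hc4⟩

/-- **Solutions inside a `2s(Δ_D+1)`-block set.** If a digraph degree sequence
completion instance (with no vertex degree constraints) has a solution, then it
has one all of whose arcs lie inside a given `2s(Δ_D+1)`-block set `C`. -/
theorem solution_in_block_set {V : Type*} [Fintype V] [DecidableEq V]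
    (A : Finset (V × V)) (hA : ∀ v : V, (v, v) ∉ A)
    (s : ℕ) (Prp : Multiset (ℕ × ℕ) → Prop)
    (C : Finset V)
    (hC : IsBlockSet A (2 * s * (maxDeg A + 1)) C)
    (hex : ∃ A' : Finset (V × V),
      (∀ a ∈ A', a ∉ A) ∧ (∀ v : V, (v, v) ∉ A') ∧ A'.card ≤ s ∧
      Prp (degSeq (A ∪ A'))) :
    ∃ A'' : Finset (V × V),
      A'' ⊆ C ×ˢ C ∧
      (∀ a ∈ A'', a ∉ A) ∧ (∀ v : V, (v, v) ∉ A'') ∧ A''.card ≤ s ∧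
      Prp (degSeq (A ∪ A'')) := by
  obtain ⟨A', h1, h2, h3, h4⟩ := hex
  obtain ⟨A'', g1, g2, g3, g4, g5⟩ := key A s C hC _ A' le_rfl h1 h2 h3
  exact ⟨A'', g1, g2, g3, g4, by rw [g5]; exact h4⟩
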